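/- If q(t) = R(t)·q₀ with R(t) the block-diagonal rotation diag(e^{i√(sλ)t}, e^{i√λ t}) acting on each body's ℝ⁴ = ℝ²×ℝ² coordinates, and q₀ is a balanced configuration satisfying M⁻¹∇U(q₀) + λŜq₀ = 0 with S = diag(s,s,1,1), then q(t) solves Newton's equations q̈ = M⁻¹∇U(q). -/

import Mathlib

open scoped BigOperators

/-- `ℝ⁴ = ℝ² × ℝ²`, indexed by `Fin 2 ⊕ Fin 2`. -/
abbrev E4 : Type := EuclideanSpace ℝ (Fin 2 ⊕ Fin 2)

noncomputable def newtonU {n : ℕ} (m : Fin n → ℝ) (q : Fin n → E4) : ℝ :=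
  ∑ i : Fin n, ∑ j : Fin n, if i < j then m i * m j / ‖q i - q j‖ else 0

noncomputable def gradU {n : ℕ} (m : Fin n → ℝ) (q : Fin n → E4) : Fin n → E4 := fun i =>
  ∑ j ∈ Finset.univ.erase i, (-(m i * m j) / ‖q i - q j‖ ^ 3) • (q i - q j)

noncomputable def sApply (s : ℝ) (x : E4) : E4 :=
  WithLp.toLp 2 fun j => (Sum.elim (fun _ => s) (fun _ => (1 : ℝ)) j) * x j

def IsBalanced {n : ℕ} (m : Fin n → ℝ) (s lam : ℝ) (q : Fin n → E4) : Prop :=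
  ∀ i, (m i)⁻¹ • gradU m q i + lam • sApply s (q i) = 0

/-- The planar rotation matrix `e^{iωt}`. -/
noncomputable def rot (ω t : ℝ) : Matrix (Fin 2) (Fin 2) ℝ :=
  !![Real.cos (ω * t), -Real.sin (ω * t); Real.sin (ω * t), Real.cos (ω * t)]

/-- The trajectory `q(t) = diag(e^{i√(sλ)t}, e^{i√λ t}) · q₀`, rotating each body's first
`ℝ²`-component with angular velocity `√(sλ)` and its second with `√λ`. -/
noncomputable def traj {n : ℕ} (s lam : ℝ) (q₀ : Fin n → E4) (t : ℝ) : Fin n → E4 :=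
  fun i => WithLp.toLp 2 fun j =>
    match j with
    | Sum.inl a => ∑ b : Fin 2, rot (Real.sqrt (s * lam)) t a b * q₀ i (Sum.inl b)
    | Sum.inr a => ∑ b : Fin 2, rot (Real.sqrt lam) t a b * q₀ i (Sum.inr b)

noncomputable def rotE (ω₁ ω₂ t : ℝ) : E4 →ₗ[ℝ] E4 where
  toFun x := WithLp.toLp 2 fun j => match j with
    | Sum.inl a => ∑ b : Fin 2, rot ω₁ t a b * x (Sum.inl b)
    | Sum.inr a => ∑ b : Fin 2, rot ω₂ t a b * x (Sum.inr b)
  map_add' x y := by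
    ext j
    cases j <;> simp [PiLp.add_apply, Fin.sum_univ_two] <;> ring
  map_smul' c x := by
    ext j
    cases j <;> simp [PiLp.smul_apply, Fin.sum_univ_two, smul_eq_mul] <;> ring

lemma norm_rotE (ω₁ ω₂ t : ℝ) (x : E4) : ‖rotE ω₁ ω₂ t x‖ = ‖x‖ := by
  simp only [EuclideanSpace.norm_eq]
  congr 1
  rw [Fintype.sum_sum_type, Fintype.sum_sum_type]
  congr 1 <;>
  · rw [Fin.sum_univ_two, Fin.sum_univ_two]
    simp [rotE, rot, Fin.sum_univ_two, Real.norm_eq_abs, sq_abs]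
    nlinarith [Real.sin_sq_add_cos_sq (ω₁ * t), Real.sin_sq_add_cos_sq (ω₂ * t)]

lemma rotE_sApply (ω₁ ω₂ t s : ℝ) (x : E4) :
    rotE ω₁ ω₂ t (sApply s x) = sApply s (rotE ω₁ ω₂ t x) := by
  ext j
  cases j <;> simp [rotE, sApply, Fin.sum_univ_two] <;> ring

noncomputable def traj' {n : ℕ} (s lam : ℝ) (q₀ : Fin n → E4) (t : ℝ) : Fin n → E4 :=
  fun i => WithLp.toLp 2 fun j =>
    match j with
    | Sum.inl a => ∑ b : Fin 2, rot (Real.sqrt (s * lam)) t a b * q₀ i (Sum.inl b)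
    | Sum.inr a => ∑ b : Fin 2, rot (Real.sqrt lam) t a b * q₀ i (Sum.inr b)

lemma traj'_eq_rotE {n : ℕ} (s lam : ℝ) (q₀ : Fin n → E4) (t : ℝ) (i : Fin n) :
    traj' s lam q₀ t i = rotE (Real.sqrt (s * lam)) (Real.sqrt lam) t (q₀ i) := rfl

noncomputable def eA (x : E4) : E4 :=
  WithLp.toLp 2 fun j => Sum.elim (fun a => x (Sum.inl a)) (fun _ => 0) j
noncomputable def eB (x : E4) : E4 :=
  WithLp.toLp 2 fun (j : Fin 2 ⊕ Fin 2) => Sum.elim (fun (a : Fin 2) => if a = 0 then -x (Sum.inl 1) else x (Sum.inl 0)) (fun _ => (0 : ℝ)) j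
noncomputable def eC (x : E4) : E4 :=
  WithLp.toLp 2 fun j => Sum.elim (fun _ => 0) (fun a => x (Sum.inr a)) j
noncomputable def eD (x : E4) : E4 :=
  WithLp.toLp 2 fun (j : Fin 2 ⊕ Fin 2) => Sum.elim (fun _ => (0 : ℝ)) (fun (a : Fin 2) => if a = 0 then -x (Sum.inr 1) else x (Sum.inr 0)) j

lemma traj'_eq_trig {n : ℕ} (s lam : ℝ) (q₀ : Fin n → E4) (τ : ℝ) (i : Fin n) :
    traj' s lam q₀ τ i =
      Real.cos (Real.sqrt (s * lam) * τ) • eA (q₀ i)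
      + Real.sin (Real.sqrt (s * lam) * τ) • eB (q₀ i)
      + Real.cos (Real.sqrt lam * τ) • eC (q₀ i)
      + Real.sin (Real.sqrt lam * τ) • eD (q₀ i) := by
  ext j
  rcases j with a | a <;> fin_cases a <;>
    simp [traj', rot, eA, eB, eC, eD, Fin.sum_univ_two, PiLp.add_apply, PiLp.smul_apply,
      smul_eq_mul] <;> ring

lemma hd_cos (ω t : ℝ) :
    HasDerivAt (fun τ => Real.cos (ω * τ)) (-Real.sin (ω * t) * ω) t := by
  convert ((hasDerivAt_id t).const_mul ω).cos using 1 <;>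
  simp only [id, mul_one]

lemma hd_sin (ω t : ℝ) :
    HasDerivAt (fun τ => Real.sin (ω * τ)) (Real.cos (ω * t) * ω) t := by
  convert ((hasDerivAt_id t).const_mul ω).sin using 1 <;>
  simp only [id, mul_one]

lemma hd_trig (ω : ℝ) (a b : E4) (t : ℝ) :
    HasDerivAt (fun τ => Real.cos (ω * τ) • a + Real.sin (ω * τ) • b)
      ((-Real.sin (ω * t) * ω) • a + (Real.cos (ω * t) * ω) • b) t :=
  ((hd_cos ω t).smul_const a).add ((hd_sin ω t).smul_const b)

lemma hd_trig' (ω : ℝ) (a b : E4) (t : ℝ) :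
    HasDerivAt (fun τ => (-Real.sin (ω * τ) * ω) • a + (Real.cos (ω * τ) * ω) • b)
      ((-(Real.cos (ω * t) * ω) * ω) • a + (-Real.sin (ω * t) * ω * ω) • b) t := by
  have h1 : HasDerivAt (fun τ => -Real.sin (ω * τ) * ω) (-(Real.cos (ω * t) * ω) * ω) t :=
    ((hd_sin ω t).neg).mul_const ω
  have h2 : HasDerivAt (fun τ => Real.cos (ω * τ) * ω) (-Real.sin (ω * t) * ω * ω) t :=
    (hd_cos ω t).mul_const ω
  exact (h1.smul_const a).add (h2.smul_const b)


lemma gradU_rotE {n : ℕ} (m : Fin n → ℝ) (q₀ : Fin n → E4) (ω₁ ω₂ t : ℝ) (i : Fin n) :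
    gradU m (fun k => rotE ω₁ ω₂ t (q₀ k)) i = rotE ω₁ ω₂ t (gradU m q₀ i) := by
  simp only [gradU, map_sum, map_smul]
  refine Finset.sum_congr rfl fun j _ => ?_
  rw [← map_sub, norm_rotE]

lemma sApply_blocks (s : ℝ) (c₁ s₁ c₂ s₂ : ℝ) (x : E4) :
    sApply s (c₁ • eA x + s₁ • eB x + (c₂ • eC x + s₂ • eD x))
      = s • (c₁ • eA x + s₁ • eB x) + (c₂ • eC x + s₂ • eD x) := by
  ext j
  cases j with
  | inl a =>
    fin_cases a <;>
      simp [sApply, eA, eB, eC, eD, PiLp.add_apply, PiLp.smul_apply, smul_eq_mul] <;> ring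
  | inr a =>
    simp [sApply, eA, eB, eC, eD, PiLp.add_apply, PiLp.smul_apply, smul_eq_mul]

/-- If `q₀` is a balanced configuration with `M⁻¹∇U(q₀) + λŜq₀ = 0`, then the rotating
trajectory `q(t) = diag(e^{i√(sλ)t}, e^{i√λ t}) q₀` solves Newton's equations
`q̈ = M⁻¹∇U(q)`. -/
theorem balanced_gives_relative_equilibrium {n : ℕ} (hn : 2 ≤ n) (m : Fin n → ℝ)
    (hm : ∀ i, 0 < m i) (s : ℝ) (hs : 1 < s) (q₀ : Fin n → E4)
    (hcoll : ∀ i j, i ≠ j → q₀ i ≠ q₀ j) (lam : ℝ) (hlam : 0 < lam)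
    (hq : IsBalanced m s lam q₀) :
    ∀ (t : ℝ) (i : Fin n),
      deriv (deriv (fun τ : ℝ => traj s lam q₀ τ i)) t
        = (m i)⁻¹ • gradU m (traj s lam q₀ t) i := by
  intro t i
  set ω₁ := Real.sqrt (s * lam) with hω₁def
  set ω₂ := Real.sqrt lam with hω₂def
  have hω1 : ω₁ * ω₁ = s * lam :=
    Real.mul_self_sqrt (by positivity)
  have hω2 : ω₂ * ω₂ = lam := Real.mul_self_sqrt hlam.le
  have hFeq : (fun τ : ℝ => traj s lam q₀ τ i) = fun τ =>
      (Real.cos (ω₁ * τ) • eA (q₀ i) + Real.sin (ω₁ * τ) • eB (q₀ i))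
      + (Real.cos (ω₂ * τ) • eC (q₀ i) + Real.sin (ω₂ * τ) • eD (q₀ i)) := by
    funext τ
    have := traj'_eq_trig s lam q₀ τ i
    rw [show traj s lam q₀ τ i = traj' s lam q₀ τ i from rfl, this]
    abel
  rw [hFeq]
  have h1 : deriv (fun τ : ℝ =>
      (Real.cos (ω₁ * τ) • eA (q₀ i) + Real.sin (ω₁ * τ) • eB (q₀ i))
      + (Real.cos (ω₂ * τ) • eC (q₀ i) + Real.sin (ω₂ * τ) • eD (q₀ i))) = fun τ =>
      ((-Real.sin (ω₁ * τ) * ω₁) • eA (q₀ i) + (Real.cos (ω₁ * τ) * ω₁) • eB (q₀ i))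
      + ((-Real.sin (ω₂ * τ) * ω₂) • eC (q₀ i) + (Real.cos (ω₂ * τ) * ω₂) • eD (q₀ i)) :=
    funext fun τ => ((hd_trig ω₁ _ _ τ).add (hd_trig ω₂ _ _ τ)).deriv
  rw [h1, (show HasDerivAt (fun τ =>
      ((-Real.sin (ω₁ * τ) * ω₁) • eA (q₀ i) + (Real.cos (ω₁ * τ) * ω₁) • eB (q₀ i))
      + ((-Real.sin (ω₂ * τ) * ω₂) • eC (q₀ i) + (Real.cos (ω₂ * τ) * ω₂) • eD (q₀ i))) _ t
      from (hd_trig' ω₁ (eA (q₀ i)) (eB (q₀ i)) t).add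
      (hd_trig' ω₂ (eC (q₀ i)) (eD (q₀ i)) t)).deriv]
  -- Right-hand side
  have htr : traj s lam q₀ t = fun k => rotE ω₁ ω₂ t (q₀ k) := rfl
  have hbal : (m i)⁻¹ • gradU m q₀ i = (-lam) • sApply s (q₀ i) := by
    have := hq i
    have h := eq_neg_of_add_eq_zero_left this
    rw [h, neg_smul]
  rw [htr, gradU_rotE, ← map_smul, hbal, map_smul, rotE_sApply]
  have htrig : rotE ω₁ ω₂ t (q₀ i) =
      (Real.cos (ω₁ * t) • eA (q₀ i) + Real.sin (ω₁ * t) • eB (q₀ i))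
      + (Real.cos (ω₂ * t) • eC (q₀ i) + Real.sin (ω₂ * t) • eD (q₀ i)) := by
    rw [← traj'_eq_rotE s lam q₀ t i, traj'_eq_trig]; abel
  rw [htrig, sApply_blocks]
  have hL : (-(Real.cos (ω₁ * t) * ω₁) * ω₁) • eA (q₀ i)
        + (-Real.sin (ω₁ * t) * ω₁ * ω₁) • eB (q₀ i)
      + ((-(Real.cos (ω₂ * t) * ω₂) * ω₂) • eC (q₀ i)
        + (-Real.sin (ω₂ * t) * ω₂ * ω₂) • eD (q₀ i))
      = (-(ω₁ * ω₁)) • (Real.cos (ω₁ * t) • eA (q₀ i) + Real.sin (ω₁ * t) • eB (q₀ i))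
      + (-(ω₂ * ω₂)) • (Real.cos (ω₂ * t) • eC (q₀ i) + Real.sin (ω₂ * t) • eD (q₀ i)) := by
    module
  rw [hL, hω1, hω2]
  have : (-(s * lam)) • (Real.cos (ω₁ * t) • eA (q₀ i) + Real.sin (ω₁ * t) • eB (q₀ i))
      = (-lam) • (s • (Real.cos (ω₁ * t) • eA (q₀ i) + Real.sin (ω₁ * t) • eB (q₀ i))) := by
    rw [smul_smul]; ring_nf
  rw [this]
  module
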